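/- The k-th incomplete moment of X ~ M(p) at y ∈ (0,1), m_k(y) = ∫₀^y x^k f_p(x) dx, equals (2p^{3/2}/(√π·(p+k)^{3/2}))·Γ(3/2, -(p+k)·ln(y)), for any k > -p. -/

import Mathlib

open MeasureTheory Real Set

noncomputable def matsuokaPDF (p x : ℝ) : ℝ :=
  if x ∈ Set.Ioo (0:ℝ) 1 then
    2 * Real.sqrt (-(p ^ 3) * Real.log x / Real.pi) * x ^ (p - 1)
  else 0

/-- The upper incomplete gamma function `Γ(a, t) = ∫_t^∞ z^(a-1) e^(-z) dz`. -/
noncomputable def upperIncompleteGamma (a t : ℝ) : ℝ :=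
  ∫ z in Set.Ioi t, z ^ (a - 1) * Real.exp (-z)

theorem matsuoka_incomplete_moment (p : ℝ) (hp : 0 < p) (k : ℝ) (hk : -p < k) :
    ∀ y ∈ Set.Ioo (0:ℝ) 1,
      ∫ x in (0:ℝ)..y, x ^ k * matsuokaPDF p x
        = (2 * p ^ ((3:ℝ)/2) / (Real.sqrt Real.pi * (p + k) ^ ((3:ℝ)/2)))
            * upperIncompleteGamma (3/2) (-(p + k) * Real.log y) := by
  intro y hy
  obtain ⟨hy0, hy1⟩ := hy
  obtain ⟨c, hc_def⟩ : ∃ c : ℝ, c = p + k := ⟨p + k, rfl⟩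
  rw [← hc_def]
  have hc : 0 < c := by rw [hc_def]; linarith
  set t := -c * Real.log y with ht_def
  have hlogy : Real.log y < 0 := Real.log_neg hy0 hy1
  have ht : 0 < t := by
    rw [ht_def]; nlinarith
  -- step 1: interval integral to set integral on Ioo 0 y
  rw [intervalIntegral.integral_of_le hy0.le, MeasureTheory.integral_Ioc_eq_integral_Ioo]
  -- step 2: unfold matsuokaPDF on Ioo 0 y
  have hsub : Set.Ioo (0:ℝ) y ⊆ Set.Ioo (0:ℝ) 1 := Set.Ioo_subset_Ioo le_rfl hy1.le
  rw [MeasureTheory.setIntegral_congr_fun measurableSet_Ioo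
    (g := fun x => x ^ k * (2 * Real.sqrt (-(p ^ 3) * Real.log x / Real.pi) * x ^ (p - 1)))
    (fun x hx => by rw [matsuokaPDF, if_pos (hsub hx)])]
  -- step 3: change of variables x = exp (-z/c)
  have himg : (fun z => Real.exp (-z / c)) '' Set.Ioi t = Set.Ioo (0:ℝ) y := by
    ext x
    constructor
    · rintro ⟨z, hz, rfl⟩
      refine ⟨Real.exp_pos _, ?_⟩
      rw [← Real.exp_log hy0]
      apply Real.exp_lt_exp.mpr
      rw [Set.mem_Ioi, ht_def] at hz
      rw [div_lt_iff₀ hc] at *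
      nlinarith
    · rintro ⟨hx0, hxy⟩
      refine ⟨-c * Real.log x, ?_, ?_⟩
      · rw [Set.mem_Ioi, ht_def]
        have : Real.log x < Real.log y := Real.log_lt_log hx0 hxy
        nlinarith
      · show Real.exp (-(-c * Real.log x) / c) = x
        have h2 : -(-c * Real.log x) / c = Real.log x := by field_simp
        rw [h2, Real.exp_log hx0]
  rw [← himg, MeasureTheory.integral_image_eq_integral_abs_deriv_smul
    (f' := fun z => Real.exp (-z / c) * (-1 / c)) measurableSet_Ioi
    (fun z _ => by
      have h1 : HasDerivAt (fun z : ℝ => -z / c) (-1 / c) z := by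
        simpa using ((hasDerivAt_id z).neg.div_const c)
      exact (h1.exp.hasDerivWithinAt))
    (fun a _ b _ hab => by
      have h3 := Real.exp_injective hab
      field_simp at h3
      linarith)]
  -- step 4: pointwise simplification on Ioi t
  have hpt : ∀ z ∈ Set.Ioi t,
      |Real.exp (-z / c) * (-1 / c)| •
        ((Real.exp (-z / c)) ^ k *
          (2 * Real.sqrt (-(p ^ 3) * Real.log (Real.exp (-z / c)) / Real.pi) *
            (Real.exp (-z / c)) ^ (p - 1)))
      = (2 * p ^ ((3:ℝ)/2) / (Real.sqrt Real.pi * c ^ ((3:ℝ)/2))) *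
          (z ^ ((3:ℝ)/2 - 1) * Real.exp (-z)) := by
    intro z hz
    have hzpos : 0 < z := lt_trans ht hz
    have hπ : (0:ℝ) < Real.pi := Real.pi_pos
    rw [smul_eq_mul, Real.log_exp]
    have harg : -(p ^ 3) * (-z / c) / Real.pi = (p ^ 3 / (c * Real.pi)) * z := by
      field_simp
    rw [harg, Real.sqrt_mul (by positivity) z,
      Real.sqrt_div (by positivity : (0:ℝ) ≤ p ^ 3), Real.sqrt_mul hc.le]
    rw [abs_mul, abs_of_pos (Real.exp_pos _), abs_div, abs_neg, abs_one, abs_of_pos hc]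
    simp only [← Real.exp_mul]
    have hp32 : p ^ ((3:ℝ)/2) = Real.sqrt (p ^ 3) := by
      rw [Real.sqrt_eq_rpow, ← Real.rpow_natCast p 3, ← Real.rpow_mul hp.le]
      norm_num
    have hz12 : z ^ ((3:ℝ)/2 - 1) = Real.sqrt z := by
      rw [Real.sqrt_eq_rpow]; norm_num
    have hc32 : c ^ ((3:ℝ)/2) = c * Real.sqrt c := by
      rw [show (3:ℝ)/2 = 1 + 1/2 by norm_num, Real.rpow_add hc, Real.rpow_one,
        Real.sqrt_eq_rpow]
    have e1 : Real.exp (-z / c) * (Real.exp (-z / c * k) * Real.exp (-z / c * (p - 1)))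
        = Real.exp (-z) := by
      rw [← Real.exp_add, ← Real.exp_add]
      congr 1
      field_simp
      rw [hc_def]; ring
    calc Real.exp (-z / c) * (1 / c) *
          (Real.exp (-z / c * k) *
            (2 * (Real.sqrt (p ^ 3) / (Real.sqrt c * Real.sqrt Real.pi) * Real.sqrt z) *
              Real.exp (-z / c * (p - 1))))
        = (2 * Real.sqrt (p ^ 3) / (Real.sqrt Real.pi * (c * Real.sqrt c))) *
            (Real.sqrt z *
              (Real.exp (-z / c) * (Real.exp (-z / c * k) * Real.exp (-z / c * (p - 1))))) := by
          ring
      _ = (2 * p ^ ((3:ℝ)/2) / (Real.sqrt Real.pi * c ^ ((3:ℝ)/2))) *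
            (z ^ ((3:ℝ)/2 - 1) * Real.exp (-z)) := by
          rw [e1, hp32, hz12, hc32]
  rw [MeasureTheory.setIntegral_congr_fun measurableSet_Ioi hpt,
    MeasureTheory.integral_const_mul, upperIncompleteGamma]
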